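/- Let X be a path-connected pointed space with basepoint x₀. Then the fibered based-loop topological complexity satisfies TC_{LP}^{(Id_X, const_{x₀}, X)}(X) = cat(X). -/

import Mathlib

set_option maxHeartbeats 1000000

open unitInterval Set

/-- A `k`-fold open cover of `A ⊆ X × X` by sets admitting continuous choices of paths
from the first to the second coordinate. -/
def SecCover {X : Type*} [TopologicalSpace X] (A : Set (X × X)) (k : ℕ) : Prop :=
  ∃ U : Fin k → Set A, (∀ i, IsOpen (U i)) ∧ (⋃ i, U i) = Set.univ ∧
    ∀ i, ∃ s : C(U i, C(unitInterval, X)),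
      ∀ p : U i, s p 0 = ((p : A) : X × X).1 ∧ s p 1 = ((p : A) : X × X).2

/-- Relative topological complexity `TC_X(A)`. -/
noncomputable def relTC {X : Type*} [TopologicalSpace X] (A : Set (X × X)) : ℕ∞ :=
  sInf {n : ℕ∞ | ∃ k : ℕ, n = k ∧ SecCover A k}

/-- Lusternik–Schnirelmann category. -/
noncomputable def lsCat (X : Type*) [TopologicalSpace X] : ℕ∞ :=
  sInf {n : ℕ∞ | ∃ k : ℕ, n = k ∧ ∃ U : Fin k → Set X,
    (∀ i, IsOpen (U i)) ∧ (⋃ i, U i) = Set.univ ∧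
    ∀ i, ∃ x₀ : X, ContinuousMap.Homotopic
      ⟨Subtype.val, continuous_subtype_val⟩
      (ContinuousMap.const (U i) x₀)}

/-- Fiber product of `f` and `g`. -/
def fiberProd {X Z : Type*} (f g : X → Z) : Set (X × X) := {p | f p.1 = g p.2}

/-- A `k`-fold open cover of `A` by sets admitting continuous based-loop sections:
loops based at `x₀` passing through the second coordinate at time `1/2`. -/
def BasedLoopSecCover {X : Type*} [TopologicalSpace X] (x₀ : X) (A : Set (X × X)) (k : ℕ) : Prop :=
  ∃ U : Fin k → Set A, (∀ i, IsOpen (U i)) ∧ (⋃ i, U i) = Set.univ ∧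
    ∀ i, ∃ s : C(U i, C(unitInterval, X)),
      ∀ p : U i, s p 0 = x₀ ∧ s p 1 = x₀ ∧
        s p ⟨1/2, by norm_num, by norm_num⟩ = ((p : A) : X × X).2

/-- The fibered based-loop topological complexity. -/
noncomputable def basedLoopTC {X : Type*} [TopologicalSpace X] (x₀ : X) (A : Set (X × X)) : ℕ∞ :=
  sInf {n : ℕ∞ | ∃ k : ℕ, n = k ∧ BasedLoopSecCover x₀ A k}

section Aux
variable {X : Type*} [TopologicalSpace X] {x₀ x₁ : X} {V : Set X}

/-- The contraction path from `y` to `x₀`. -/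
noncomputable def auxL
    (H : ContinuousMap.Homotopy (⟨Subtype.val, continuous_subtype_val⟩ : C(V, X))
      (ContinuousMap.const V x₁)) (q : Path x₁ x₀) (y : V) : Path (y : X) x₀ :=
  (H.evalAt y).trans q

/-- The based loop through `y`. -/
noncomputable def auxLoop
    (H : ContinuousMap.Homotopy (⟨Subtype.val, continuous_subtype_val⟩ : C(V, X))
      (ContinuousMap.const V x₁)) (q : Path x₁ x₀) (y : V) : Path x₀ x₀ :=
  (auxL H q y).symm.trans (auxL H q y)

theorem auxL_cont
    (H : ContinuousMap.Homotopy (⟨Subtype.val, continuous_subtype_val⟩ : C(V, X))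
      (ContinuousMap.const V x₁)) (q : Path x₁ x₀) : Continuous ↿(auxL H q) := by
  apply Path.trans_continuous_family
  · show Continuous fun p : V × unitInterval => H (p.2, p.1)
    exact H.continuous.comp (continuous_snd.prodMk continuous_fst)
  · show Continuous fun p : V × unitInterval => q p.2
    exact q.continuous.comp continuous_snd

theorem auxLoop_cont
    (H : ContinuousMap.Homotopy (⟨Subtype.val, continuous_subtype_val⟩ : C(V, X))
      (ContinuousMap.const V x₁)) (q : Path x₁ x₀) : Continuous ↿(auxLoop H q) :=
  Path.trans_continuous_family _ (Path.symm_continuous_family _ (auxL_cont H q)) _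
    (auxL_cont H q)

theorem auxLoop_half
    (H : ContinuousMap.Homotopy (⟨Subtype.val, continuous_subtype_val⟩ : C(V, X))
      (ContinuousMap.const V x₁)) (q : Path x₁ x₀) (y : V) :
    auxLoop H q y ⟨1/2, by norm_num, by norm_num⟩ = (y : X) := by
  rw [auxLoop, Path.trans_apply]
  simp only [show ((⟨1/2, by norm_num, by norm_num⟩ : unitInterval) : ℝ) = 1/2 from rfl]
  rw [dif_pos (by norm_num)]
  have : (⟨2 * (1/2 : ℝ), by norm_num⟩ : unitInterval) = 1 := by
    apply Subtype.ext; norm_num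
  rw [this]
  simp [auxL]

/-- The section on `V` built from a contracting homotopy and a path to `x₀`. -/
noncomputable def auxSec
    (H : ContinuousMap.Homotopy (⟨Subtype.val, continuous_subtype_val⟩ : C(V, X))
      (ContinuousMap.const V x₁)) (q : Path x₁ x₀) : C(V, C(unitInterval, X)) :=
  (ContinuousMap.mk (fun p : V × unitInterval => auxLoop H q p.1 p.2)
    (auxLoop_cont H q)).curry

theorem auxSec_spec
    (H : ContinuousMap.Homotopy (⟨Subtype.val, continuous_subtype_val⟩ : C(V, X))
      (ContinuousMap.const V x₁)) (q : Path x₁ x₀) (y : V) :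
    auxSec H q y 0 = x₀ ∧ auxSec H q y 1 = x₀ ∧
      auxSec H q y ⟨1/2, by norm_num, by norm_num⟩ = (y : X) :=
  ⟨by show auxLoop H q y 0 = x₀; simp,
   by show auxLoop H q y 1 = x₀; simp,
   by show auxLoop H q y _ = (y : X); exact auxLoop_half H q y⟩

end Aux

theorem basedLoopKey {X : Type*} [TopologicalSpace X] [PathConnectedSpace X] (x₀ : X) (k : ℕ) :
    BasedLoopSecCover x₀ (fiberProd (id : X → X) (fun _ : X => x₀)) k ↔
    (∃ U : Fin k → Set X,
    (∀ i, IsOpen (U i)) ∧ (⋃ i, U i) = Set.univ ∧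
    ∀ i, ∃ x₁ : X, ContinuousMap.Homotopic
      ⟨Subtype.val, continuous_subtype_val⟩
      (ContinuousMap.const (U i) x₁)) := by
  have hA : fiberProd (id : X → X) (fun _ : X => x₀) = {p : X × X | p.1 = x₀} := rfl
  rw [BasedLoopSecCover, hA]
  constructor
  · rintro ⟨U, hop, hcov, hsec⟩
    have hmem : ∀ y : X, ((x₀, y) : X × X) ∈ {p : X × X | p.1 = x₀} := fun y => rfl
    set m : X → {p : X × X | p.1 = x₀} := fun y => ⟨(x₀, y), hmem y⟩ with hm
    have hmc : Continuous m := by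
      apply Continuous.subtype_mk; fun_prop
    refine ⟨fun i => m ⁻¹' U i, fun i => (hop i).preimage hmc, ?_, ?_⟩
    · ext y
      simp only [mem_iUnion, mem_univ, iff_true, mem_preimage]
      have : m y ∈ ⋃ i, U i := by rw [hcov]; trivial
      simpa only [mem_iUnion] using this
    · intro i
      obtain ⟨s, hs⟩ := hsec i
      refine ⟨x₀, ?_⟩
      set sg : C(unitInterval, unitInterval) :=
        ⟨fun t => ⟨(1 + t) / 2, by have := t.2.1; linarith, by have := t.2.2; linarith⟩, by
          apply Continuous.subtype_mk; fun_prop⟩ with hsg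
      set G : C(m ⁻¹' U i, C(unitInterval, X)) :=
        s.comp ⟨fun y => ⟨m y, y.2⟩, by
          apply Continuous.subtype_mk; exact hmc.comp continuous_subtype_val⟩ with hG
      refine ⟨⟨⟨fun q => G q.2 (sg q.1), ?_⟩, ?_, ?_⟩⟩
      · exact continuous_eval.comp
          ((G.continuous.comp continuous_snd).prodMk (sg.continuous.comp continuous_fst))
      · intro y
        have h12 : sg 0 = ⟨1/2, by norm_num, by norm_num⟩ := by
          apply Subtype.ext; simp [hsg]
        show G y (sg 0) = (y : X)
        rw [h12]
        exact (hs ⟨m y, y.2⟩).2.2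
      · intro y
        have h1 : sg 1 = 1 := by
          apply Subtype.ext; simp [hsg]
        show G y (sg 1) = x₀
        rw [h1]
        exact (hs ⟨m y, y.2⟩).2.1
  · rintro ⟨V, hop, hcov, hsec⟩
    set e : {p : X × X | p.1 = x₀} → X := fun p => (p : X × X).2 with he
    have hec : Continuous e := continuous_snd.comp continuous_subtype_val
    refine ⟨fun i => e ⁻¹' V i, fun i => (hop i).preimage hec, ?_, ?_⟩
    · ext p
      simp only [mem_iUnion, mem_univ, iff_true, mem_preimage]
      have : e p ∈ ⋃ i, V i := by rw [hcov]; trivial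
      simpa only [mem_iUnion] using this
    · intro i
      obtain ⟨x₁, ⟨H⟩⟩ := hsec i
      obtain ⟨q⟩ := PathConnectedSpace.joined x₁ x₀
      set c : C(↥(e ⁻¹' V i), ↥(V i)) :=
        ⟨fun p => ⟨e p, p.2⟩, by
          apply Continuous.subtype_mk; exact hec.comp continuous_subtype_val⟩ with hc
      refine ⟨(auxSec H q).comp c, fun p => ?_⟩
      have := auxSec_spec H q (c p)
      exact ⟨this.1, this.2.1, this.2.2⟩


theorem basedLoopTC_id_const_eq_cat {X : Type*} [TopologicalSpace X] [PathConnectedSpace X]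
    (x₀ : X) :
    basedLoopTC x₀ (fiberProd (id : X → X) (fun _ : X => x₀)) = lsCat X := by
  unfold basedLoopTC lsCat
  congr 1
  ext n
  constructor
  · rintro ⟨k, rfl, h⟩
    exact ⟨k, rfl, (basedLoopKey x₀ k).mp h⟩
  · rintro ⟨k, rfl, h⟩
    exact ⟨k, rfl, (basedLoopKey x₀ k).mpr h⟩
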